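/- The operators ē_1 = (1/c) b_{12} ((u_2 - u_1 + c)/(u_2 - u_1))(1 + k_{12}) and τ - ē_1 = (1/c)(1 - k_{12})((u_1 - u_2 + c)/(u_1 - u_2)) b_{12}, where b_{12} = u_1 - u_2 + b and τ = 2(1 + b/c), are well-defined on polynomials (map polynomials to polynomials) and satisfy ē_1^2 = τ ē_1. -/

import Mathlib

open MvPolynomial

/-- Key divisibility: `Q - swap Q` is divisible by `X 0 - X 1`. -/
lemma swap_sub_dvd {F : Type*} [CommRing F] (Q : MvPolynomial (Fin 2) F) :
    (X 0 - X 1 : MvPolynomial (Fin 2) F) ∣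
      Q - rename (Equiv.swap (0 : Fin 2) 1) Q := by
  set v : Fin 2 → Polynomial (MvPolynomial (Fin 2) F) :=
    ![Polynomial.X, Polynomial.C (X 0 + X 1) - Polynomial.X] with hv
  have comp : ∀ (a : MvPolynomial (Fin 2) F) (Q : MvPolynomial (Fin 2) F),
      Polynomial.eval a (aeval v Q) = aeval (fun i => Polynomial.eval a (v i)) Q := by
    intro a Q
    induction Q using MvPolynomial.induction_on with
    | C r => simp [algebraMap_eq]
    | add p q hp hq => simp [hp, hq]
    | mul_X p i hp => simp [hp]
  have h0 : Polynomial.eval (X (0 : Fin 2) : MvPolynomial (Fin 2) F) (aeval v Q) = Q := by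
    rw [comp]
    have hfun : (fun i => Polynomial.eval (X (0 : Fin 2) : MvPolynomial (Fin 2) F) (v i))
        = (X : Fin 2 → MvPolynomial (Fin 2) F) := by
      funext i; fin_cases i <;> simp [hv]
    rw [hfun, aeval_X_left_apply]
  have h1 : Polynomial.eval (X (1 : Fin 2) : MvPolynomial (Fin 2) F) (aeval v Q)
      = rename (Equiv.swap (0 : Fin 2) 1) Q := by
    rw [comp]
    rw [rename_eq_aeval]
    have hfun : (fun i => Polynomial.eval (X (1 : Fin 2) : MvPolynomial (Fin 2) F) (v i))
        = (X : Fin 2 → MvPolynomial (Fin 2) F) ∘ (Equiv.swap (0 : Fin 2) 1) := by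
      funext i; fin_cases i <;> simp [hv]
    rw [hfun]
  have := Polynomial.sub_dvd_eval_sub (X (0 : Fin 2) : MvPolynomial (Fin 2) F) (X 1) (aeval v Q)
  rw [h0, h1] at this
  exact this

/-- The Brauer projector `ē₁ = (1/c) b₁₂ ((u₂-u₁+c)/(u₂-u₁))(1+k₁₂)` is well defined
on polynomials (the symmetrized expression is again a polynomial, the apparent pole at
`u₁ = u₂` cancelling) and satisfies `ē₁² = τ ē₁` with `τ = 2(1 + b/c)`.
Here `c·(u₂-u₁)·(P ē₁) = N(P) - k₁₂ N(P)` with `N(P) = P·(u₂-u₁+c)·(u₂-u₁+b)`,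
and `k₁₂` swaps the two variables. -/
theorem brauer_e1_projector {F : Type*} [Field F] [CharZero F]
    (b c : F) (hb : b ≠ 0) (hc : c ≠ 0)
    (k : MvPolynomial (Fin 2) F → MvPolynomial (Fin 2) F)
    (hk : ∀ P, k P = rename (Equiv.swap (0 : Fin 2) 1) P)
    (N : MvPolynomial (Fin 2) F → MvPolynomial (Fin 2) F)
    (hN : ∀ P, N P = P * (X 1 - X 0 + C c) * (X 1 - X 0 + C b))
    (P : MvPolynomial (Fin 2) F) :
    ∃ E : MvPolynomial (Fin 2) F,
      (X 1 - X 0) * (C c * E) = N P - k (N P) ∧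
      (∀ E₂ : MvPolynomial (Fin 2) F,
        (X 1 - X 0) * (C c * E₂) = N E - k (N E) →
        E₂ = C (2 * (1 + b / c)) * E) := by
  set σ : Fin 2 ≃ Fin 2 := Equiv.swap 0 1 with hσ
  -- basic nonvanishing facts
  have hX01 : (X 0 : MvPolynomial (Fin 2) F) ≠ X 1 := by
    intro h
    have := congrArg (coeff (Finsupp.single (0 : Fin 2) 1)) h
    simp [coeff_X', Finsupp.single_eq_single_iff] at this
  have hd : (X 1 - X 0 : MvPolynomial (Fin 2) F) ≠ 0 := sub_ne_zero.mpr (Ne.symm hX01)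
  have hd' : (X 0 - X 1 : MvPolynomial (Fin 2) F) ≠ 0 := sub_ne_zero.mpr hX01
  have hCc : (C c : MvPolynomial (Fin 2) F) ≠ 0 := by
    simpa using hc
  -- rename facts
  have hσσ : ∀ Q : MvPolynomial (Fin 2) F, rename σ (rename σ Q) = Q := by
    intro Q
    rw [rename_rename]
    have : (σ : Fin 2 → Fin 2) ∘ σ = id := by
      funext i; simp [hσ]
    rw [this, rename_id, AlgHom.id_apply]
  have hrd : rename σ (X 1 - X 0 : MvPolynomial (Fin 2) F) = X 0 - X 1 := by
    simp [hσ]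
  -- construct E
  obtain ⟨D, hD⟩ := swap_sub_dvd (F := F) (N P)
  set E : MvPolynomial (Fin 2) F := C c⁻¹ * (-D) with hEdef
  have hcc : (C c : MvPolynomial (Fin 2) F) * C c⁻¹ = 1 := by
    rw [← C_mul, mul_inv_cancel₀ hc, C_1]
  have hE : (X 1 - X 0) * (C c * E) = N P - rename σ (N P) := by
    rw [hEdef]
    linear_combination ((X 1 - X 0) * (-D)) * hcc - hD
  refine ⟨E, by rw [hk]; exact hE, ?_⟩
  -- E is symmetric
  have h1 := congrArg (rename σ) hE
  rw [map_mul, map_mul, hrd, rename_C, map_sub, hσσ] at h1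
  have h2 : (X 0 - X 1) * ((C c : MvPolynomial (Fin 2) F) * rename σ E)
      = (X 0 - X 1) * (C c * E) := by
    linear_combination h1 + hE
  have hkE : rename σ E = E :=
    mul_left_cancel₀ hCc (mul_left_cancel₀ hd' h2)
  -- the projector identity
  have hNE : rename σ (N E) = E * (X 0 - X 1 + C c) * (X 0 - X 1 + C b) := by
    rw [hN, map_mul, map_mul, hkE, map_add, map_add, hrd, rename_C, rename_C]
  have hτ : (C c : MvPolynomial (Fin 2) F) * C (2 * (1 + b / c)) = 2 * (C b + C c) := by
    rw [← C_mul]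
    have : c * (2 * (1 + b / c)) = 2 * (b + c) := by field_simp; ring
    rw [this, C_mul, ← C_add]
    congr 1
  have key : (X 1 - X 0) * (C c * (C (2 * (1 + b / c)) * E))
      = N E - rename σ (N E) := by
    rw [hNE, hN]
    linear_combination ((X 1 - X 0) * E) * hτ
  intro E₂ h₂
  rw [hk] at h₂
  have : (X 1 - X 0) * ((C c : MvPolynomial (Fin 2) F) * E₂)
      = (X 1 - X 0) * (C c * (C (2 * (1 + b / c)) * E)) := by
    rw [h₂, key]
  exact mul_left_cancel₀ hCc (mul_left_cancel₀ hd this)
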